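/- Let U be a uniform and hollow right R-module, put M = U², U₁ = U × 0 and U₂ = 0 × U. Suppose that for any right R-module X, any homomorphism f : X → U₂ and any injective homomorphism g : X → U₁, one of the following holds: (i) there exists a homomorphism h : U₁ → U₂ such that f = h ∘ g; (ii) there exist a submodule N of U₁ containing the image of g and a surjective homomorphism h : N → U₂ such that f = h ∘ g. Then M is extending. -/

import Mathlib

/-- A submodule `N` of `M` is *small* (superfluous) in `M` if `N + X ≠ M`
for every proper submodule `X` of `M`. -/
def IsSmallSubmodule {R M : Type*} [Ring R] [AddCommGroup M] [Module R M]
    (N : Submodule R M) : Prop :=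
  ∀ X : Submodule R M, X ≠ ⊤ → N ⊔ X ≠ ⊤

/-- A nonzero module `M` is *hollow* if every proper submodule of `M` is small in `M`. -/
def IsHollowModule (R M : Type*) [Ring R] [AddCommGroup M] [Module R M] : Prop :=
  Nontrivial M ∧ ∀ N : Submodule R M, N ≠ ⊤ → IsSmallSubmodule N

/-- A submodule `N` of `M` is *essential* in `M` if `N ∩ X ≠ 0`
for every nonzero submodule `X` of `M`. -/
def IsEssentialSubmodule {R M : Type*} [Ring R] [AddCommGroup M] [Module R M]
    (N : Submodule R M) : Prop :=
  ∀ X : Submodule R M, X ≠ ⊥ → N ⊓ X ≠ ⊥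

/-- A nonzero module `M` is *uniform* if every nonzero submodule of `M` is essential in `M`. -/
def IsUniformModule (R M : Type*) [Ring R] [AddCommGroup M] [Module R M] : Prop :=
  Nontrivial M ∧ ∀ N : Submodule R M, N ≠ ⊥ → IsEssentialSubmodule N

/-- `X` is a direct summand of `M`. -/
def IsDirectSummand {R M : Type*} [Ring R] [AddCommGroup M] [Module R M]
    (X : Submodule R M) : Prop :=
  ∃ Y : Submodule R M, IsCompl X Y

/-- A module `M` is *lifting* if for every submodule `N` of `M` there is a direct summand
`X` of `M` with `X ⊆ N` such that `N/X` is small in `M/X`. -/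
def IsLiftingModule (R M : Type*) [Ring R] [AddCommGroup M] [Module R M] : Prop :=
  ∀ N : Submodule R M, ∃ X : Submodule R M,
    X ≤ N ∧ IsDirectSummand X ∧ IsSmallSubmodule (N.map X.mkQ)

/-- A module `M` is *extending* if for every submodule `N` of `M` there is a direct summand
`X` of `M` such that `N` is essential in `X`. -/
def IsExtendingModule (R M : Type*) [Ring R] [AddCommGroup M] [Module R M] : Prop :=
  ∀ N : Submodule R M, ∃ X : Submodule R M,
    IsDirectSummand X ∧ N ≤ X ∧ ∀ Y : Submodule R M, Y ≤ X → Y ≠ ⊥ → N ⊓ Y ≠ ⊥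

/-- A module is *uniserial* if its submodules are linearly ordered by inclusion. -/
def IsUniserialModule (R M : Type*) [Ring R] [AddCommGroup M] [Module R M] : Prop :=
  ∀ A B : Submodule R M, A ≤ B ∨ B ≤ A

/-- An internal finite direct sum decomposition `M = ⨁ᵢ Fᵢ`. -/
def IsInternalDirectSum {R M ι : Type*} [Ring R] [AddCommGroup M] [Module R M]
    (F : ι → Submodule R M) : Prop :=
  (⨆ i, F i) = ⊤ ∧ ∀ i, Disjoint (F i) (⨆ j ∈ ({i}ᶜ : Set ι), F j)

/-- A module `M` satisfies the *finite internal exchange property* if for any direct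
summand `X` of `M` and any finite direct sum decomposition `M = M₁ ⊕ ⋯ ⊕ Mₙ` there are
submodules `Mᵢ' ⊆ Mᵢ` with `M = X ⊕ M₁' ⊕ ⋯ ⊕ Mₙ'`. -/
def SatisfiesFIEP (R M : Type*) [Ring R] [AddCommGroup M] [Module R M] : Prop :=
  ∀ (X : Submodule R M), IsDirectSummand X →
    ∀ (n : ℕ) (Mi : Fin n → Submodule R M), IsInternalDirectSum Mi →
      ∃ Mi' : Fin n → Submodule R M, (∀ i, Mi' i ≤ Mi i) ∧
        IsInternalDirectSum (fun o : Option (Fin n) => o.elim X Mi')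

universe u

section Aux

variable {R : Type*} {U : Type u} [Ring R] [AddCommGroup U] [Module R U]

lemma aux_mem_fst {x : U × U} : x ∈ Submodule.fst R U U ↔ x.2 = 0 := by
  simp [Submodule.fst]

lemma aux_mem_snd {x : U × U} : x ∈ Submodule.snd R U U ↔ x.1 = 0 := by
  simp [Submodule.snd]

/-- If `C ⊓ U₂ = ⊥` then elements of `C` with vanishing first coordinate vanish. -/
lemma aux_zero {C : Submodule R (U × U)} (hC2 : C ⊓ Submodule.snd R U U = ⊥) :
    ∀ x ∈ C, x.1 = 0 → x = 0 := by
  intro x hx h1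
  have hmem : x ∈ C ⊓ Submodule.snd R U U := ⟨hx, aux_mem_snd.mpr h1⟩
  rw [hC2] at hmem
  simpa using hmem

/-- `N` is essential in any `C` containing it when `C ⊓ U₂ = ⊥` (uses uniformity). -/
lemma aux_ess (hU : IsUniformModule R U) {C N Y : Submodule R (U × U)}
    (hC2 : C ⊓ Submodule.snd R U U = ⊥) (hNC : N ≤ C) (hN : N ≠ ⊥)
    (hYC : Y ≤ C) (hY : Y ≠ ⊥) : N ⊓ Y ≠ ⊥ := by
  have hzero := aux_zero hC2
  obtain ⟨n, hnN, hn0⟩ := N.ne_bot_iff.mp hN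
  obtain ⟨y, hyY, hy0⟩ := Y.ne_bot_iff.mp hY
  have hn1 : n.1 ≠ 0 := fun h => hn0 (hzero n (hNC hnN) h)
  have hy1 : y.1 ≠ 0 := fun h => hy0 (hzero y (hYC hyY) h)
  set Nπ := N.map (LinearMap.fst R U U) with hNπdef
  have hNπbot : Nπ ≠ ⊥ := by
    intro h
    have : n.1 ∈ Nπ := ⟨n, hnN, rfl⟩
    rw [h] at this
    exact hn1 (by simpa using this)
  have hess := hU.2 Nπ hNπbot (Submodule.span R {y.1})
    (by rwa [ne_eq, Submodule.span_singleton_eq_bot])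
  obtain ⟨u, ⟨huN, huS⟩, hu0⟩ := (Submodule.ne_bot_iff _).mp hess
  obtain ⟨r, hr⟩ := Submodule.mem_span_singleton.mp huS
  obtain ⟨m, hmN, hm1⟩ := huN
  have hm1' : m.1 = u := hm1
  have hry : r • y ∈ Y := Y.smul_mem r hyY
  have hdiff : m - r • y = 0 := by
    apply hzero _ (Submodule.sub_mem _ (hNC hmN) (hYC hry))
    have h2 : (r • y).1 = r • y.1 := rfl
    simp [hm1', h2, hr]
  have hmy : m = r • y := by rwa [sub_eq_zero] at hdiff
  rw [Submodule.ne_bot_iff]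
  refine ⟨m, ⟨hmN, hmy ▸ hry⟩, fun h => hu0 ?_⟩
  rw [← hm1', h]
  rfl

lemma aux_isCompl {C Y : Submodule R (U × U)}
    (hd : ∀ x ∈ C, x ∈ Y → x = 0)
    (hs : ∀ x : U × U, ∃ c ∈ C, ∃ d ∈ Y, c + d = x) : IsCompl C Y := by
  constructor
  · rw [Submodule.disjoint_def]
    exact hd
  · rw [codisjoint_iff, eq_top_iff]
    intro x _
    obtain ⟨c, hc, d, hd', hcd⟩ := hs x
    exact Submodule.mem_sup.mpr ⟨c, hc, d, hd', hcd⟩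

end Aux

/-- The key lemma: if `N ≠ ⊥` and `N ⊓ U₂ = ⊥`, then `N` is essential in a direct
summand of `U × U`. -/
lemma aux_main {R : Type*} {U : Type u} [Ring R] [AddCommGroup U] [Module R U]
    (hU : IsUniformModule R U) (hH : IsHollowModule R U)
    (hyp : ∀ (X : Type u) [AddCommGroup X] [Module R X]
      (f : X →ₗ[R] ↥(Submodule.snd R U U)) (g : X →ₗ[R] ↥(Submodule.fst R U U)),
      Function.Injective g →
        (∃ h : ↥(Submodule.fst R U U) →ₗ[R] ↥(Submodule.snd R U U), f = h ∘ₗ g) ∨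
        (∃ (N : Submodule R ↥(Submodule.fst R U U)) (hN : ∀ x, g x ∈ N)
            (h : ↥N →ₗ[R] ↥(Submodule.snd R U U)),
          Function.Surjective h ∧ f = h ∘ₗ LinearMap.codRestrict N g hN))
    (N : Submodule R (U × U)) (hNbot : N ≠ ⊥) (hN2 : N ⊓ Submodule.snd R U U = ⊥) :
    ∃ X : Submodule R (U × U), IsDirectSummand X ∧ N ≤ X ∧
      ∀ Y : Submodule R (U × U), Y ≤ X → Y ≠ ⊥ → N ⊓ Y ≠ ⊥ := by
  classical
  set S : Set (Submodule R (U × U)) := {D | N ≤ D ∧ D ⊓ Submodule.snd R U U = ⊥}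
    with hSdef
  obtain ⟨C, hNC, hCmax⟩ := zorn_le_nonempty₀ S
    (fun c hcS hchain y hy => by
      refine ⟨sSup c, ⟨le_trans (hcS hy).1 (le_sSup hy), ?_⟩, fun z hz => le_sSup hz⟩
      rw [eq_bot_iff]
      rintro x ⟨hx1, hx2⟩
      obtain ⟨D, hDc, hxD⟩ :=
        (Submodule.mem_sSup_of_directed ⟨y, hy⟩ hchain.directedOn).mp hx1
      have hxm : x ∈ D ⊓ Submodule.snd R U U := ⟨hxD, hx2⟩
      rw [(hcS hDc).2] at hxm
      exact hxm) N ⟨le_rfl, hN2⟩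
  have hC2 : C ⊓ Submodule.snd R U U = ⊥ := hCmax.1.2
  have hzero := aux_zero hC2
  let g : ↥C →ₗ[R] ↥(Submodule.fst R U U) :=
    LinearMap.codRestrict _ ((LinearMap.inl R U U) ∘ₗ (LinearMap.fst R U U) ∘ₗ C.subtype)
      (fun c => aux_mem_fst.mpr rfl)
  let f : ↥C →ₗ[R] ↥(Submodule.snd R U U) :=
    LinearMap.codRestrict _ ((LinearMap.inr R U U) ∘ₗ (LinearMap.snd R U U) ∘ₗ C.subtype)
      (fun c => aux_mem_snd.mpr rfl)
  have hgval : ∀ c : ↥C, (g c : U × U) = ((c : U × U).1, 0) := fun c => rfl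
  have hfval : ∀ c : ↥C, (f c : U × U) = (0, (c : U × U).2) := fun c => rfl
  have hginj : Function.Injective g := by
    intro a b hab
    have h1 : (a : U × U).1 = (b : U × U).1 := by
      have h2 := congrArg (fun z : ↥(Submodule.fst R U U) => (z : U × U).1) hab
      simpa [hgval] using h2
    apply Subtype.ext
    have hz : ((a : U × U) - (b : U × U)) = 0 := by
      apply hzero _ (Submodule.sub_mem _ a.2 b.2)
      simp [h1]
    exact sub_eq_zero.mp hz
  have conclude : ∀ Y : Submodule R (U × U), IsCompl C Y →
      ∃ X : Submodule R (U × U), IsDirectSummand X ∧ N ≤ X ∧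
        ∀ Z : Submodule R (U × U), Z ≤ X → Z ≠ ⊥ → N ⊓ Z ≠ ⊥ :=
    fun Y hY => ⟨C, ⟨Y, hY⟩, hNC, fun Z hZC hZ => aux_ess hU hC2 hNC hNbot hZC hZ⟩
  rcases hyp (↥C) f g hginj with ⟨h, hfh⟩ | ⟨N', hNmem, h, hsurj, hfh⟩
  · -- case (i): `C` is the full graph of a map `U₁ → U₂`; complement `U₂`.
    let ι1 : U →ₗ[R] ↥(Submodule.fst R U U) :=
      LinearMap.codRestrict _ (LinearMap.inl R U U) (fun u => aux_mem_fst.mpr rfl)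
    let χ : U →ₗ[R] U :=
      (LinearMap.snd R U U) ∘ₗ (Submodule.snd R U U).subtype ∘ₗ h ∘ₗ ι1
    let Γ : U →ₗ[R] (U × U) := LinearMap.prod LinearMap.id χ
    have hΓval : ∀ u, Γ u = (u, χ u) := fun u => rfl
    have hCD : C ≤ LinearMap.range Γ := by
      intro x hx
      refine ⟨x.1, ?_⟩
      have hx2 : χ x.1 = x.2 := by
        have hcf := LinearMap.congr_fun hfh (⟨x, hx⟩ : ↥C)
        have hge : g (⟨x, hx⟩ : ↥C) = ι1 x.1 := Subtype.ext rfl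
        have h3 := congrArg (fun z : ↥(Submodule.snd R U U) => (z : U × U).2) hcf
        simp only [LinearMap.comp_apply] at h3
        rw [hge] at h3
        exact h3.symm
      rw [hΓval, hx2]
    have hDS : LinearMap.range Γ ∈ S := by
      constructor
      · exact le_trans hNC hCD
      · rw [eq_bot_iff]
        rintro x ⟨hx1, hx2⟩
        obtain ⟨u, rfl⟩ := hx1
        have hu : u = 0 := aux_mem_snd.mp hx2
        simp [hu]
    have hCeq : C = LinearMap.range Γ := le_antisymm hCD (hCmax.2 hDS hCD)
    apply conclude (Submodule.snd R U U)
    apply aux_isCompl (fun x hx hx2 => hzero x hx (aux_mem_snd.mp hx2))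
    intro x
    refine ⟨Γ x.1, by rw [hCeq]; exact ⟨x.1, rfl⟩, (0, x.2 - χ x.1),
      aux_mem_snd.mpr rfl, ?_⟩
    rw [hΓval]
    exact Prod.ext (by simp) (by simp)
  · -- case (ii): `C` is the graph of a surjection `N' → U₂`.
    let Γ' : ↥N' →ₗ[R] (U × U) :=
      ((Submodule.fst R U U).subtype ∘ₗ N'.subtype) + ((Submodule.snd R U U).subtype ∘ₗ h)
    have hΓ'val : ∀ ν : ↥N',
        Γ' ν = ((ν : ↥(Submodule.fst R U U)) : U × U) + ((h ν) : U × U) := fun ν => rfl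
    have hfst0 : ∀ ν : ↥N', ((ν : ↥(Submodule.fst R U U)) : U × U).2 = 0 :=
      fun ν => aux_mem_fst.mp (ν : ↥(Submodule.fst R U U)).2
    have hsnd0 : ∀ z : ↥(Submodule.snd R U U), (z : U × U).1 = 0 :=
      fun z => aux_mem_snd.mp z.2
    have hCD : C ≤ LinearMap.range Γ' := by
      intro x hx
      refine ⟨⟨g ⟨x, hx⟩, hNmem ⟨x, hx⟩⟩, ?_⟩
      have hcf := LinearMap.congr_fun hfh (⟨x, hx⟩ : ↥C)
      have hhe : h ⟨g ⟨x, hx⟩, hNmem ⟨x, hx⟩⟩ = f ⟨x, hx⟩ := by rw [hcf]; rfl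
      rw [hΓ'val, hhe]
      show ((g ⟨x, hx⟩ : U × U)) + ((f ⟨x, hx⟩ : U × U)) = x
      rw [hgval, hfval]
      exact Prod.ext (by simp) (by simp)
    have hDS : LinearMap.range Γ' ∈ S := by
      constructor
      · exact le_trans hNC hCD
      · rw [eq_bot_iff]
        rintro z ⟨hz1, hz2⟩
        obtain ⟨ν, rfl⟩ := hz1
        have h1 : (Γ' ν).1 = ((ν : ↥(Submodule.fst R U U)) : U × U).1 := by
          rw [hΓ'val]
          simp [hsnd0]
        have h2 : ((ν : ↥(Submodule.fst R U U)) : U × U).1 = 0 := by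
          rw [← h1]
          exact aux_mem_snd.mp hz2
        have hν0 : ν = 0 := by
          apply Subtype.ext
          apply Subtype.ext
          exact Prod.ext h2 (hfst0 ν)
        rw [hν0]
        simp
    have hCeq : C = LinearMap.range Γ' := le_antisymm hCD (hCmax.2 hDS hCD)
    have hsndfull : ∀ b : U, ∃ c ∈ C, c.2 = b := by
      intro b
      obtain ⟨ν, hν⟩ := hsurj ⟨(0, b), aux_mem_snd.mpr rfl⟩
      refine ⟨Γ' ν, by rw [hCeq]; exact ⟨ν, rfl⟩, ?_⟩
      rw [hΓ'val, hν]
      show ((ν : ↥(Submodule.fst R U U)) : U × U).2 + ((0, b) : U × U).2 = b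
      rw [hfst0]
      simp
    by_cases hA : C.map (LinearMap.fst R U U) = ⊤
    · -- first projection is full: complement `U₂`
      apply conclude (Submodule.snd R U U)
      apply aux_isCompl (fun x hx hx2 => hzero x hx (aux_mem_snd.mp hx2))
      intro x
      have hx1 : x.1 ∈ C.map (LinearMap.fst R U U) := by rw [hA]; trivial
      obtain ⟨c, hc, hc1⟩ := hx1
      refine ⟨c, hc, (0, x.2 - c.2), aux_mem_snd.mpr rfl, ?_⟩
      exact Prod.ext (by simpa using hc1) (by simp)
    · by_cases hK : ∀ k : U, ((k, 0) : U × U) ∈ C → k = 0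
      · -- graph of an injective map: complement `U₁`
        apply conclude (Submodule.fst R U U)
        apply aux_isCompl
        · intro x hx hx1
          have h2 : x.2 = 0 := aux_mem_fst.mp hx1
          have hx' : ((x.1, 0) : U × U) ∈ C := by
            rwa [show ((x.1, 0) : U × U) = x from Prod.ext rfl h2.symm]
          exact Prod.ext (hK x.1 hx') h2
        · intro x
          obtain ⟨c, hc, hc2⟩ := hsndfull x.2
          refine ⟨c, hc, (x.1 - c.1, 0), aux_mem_fst.mpr rfl, ?_⟩
          exact Prod.ext (by simp) (by simpa using hc2)
      · -- the interesting case: complement the diagonal, using hollowness/uniformity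
        push_neg at hK
        obtain ⟨k, hkC, hk0⟩ := hK
        set K : Submodule R U := C.comap (LinearMap.inl R U U) with hKdef
        have hKbot : K ≠ ⊥ := by
          rw [Submodule.ne_bot_iff]
          refine ⟨k, ?_, hk0⟩
          show (LinearMap.inl R U U) k ∈ C
          simpa using hkC
        let δ : U →ₗ[R] U × U := LinearMap.prod LinearMap.id LinearMap.id
        have hδval : ∀ u, δ u = (u, u) := fun u => rfl
        set F : Submodule R U := C.comap δ with hFdef
        have hFbot : F = ⊥ := by
          by_contra hF
          have hKF := hU.2 K hKbot F hF
          obtain ⟨u, ⟨huK, huF⟩, hu0⟩ := (Submodule.ne_bot_iff _).mp hKF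
          have huK' : ((u, 0) : U × U) ∈ C := by exact huK
          have huF' : ((u, u) : U × U) ∈ C := by exact huF
          have h1 : ((0, u) : U × U) ∈ C := by
            have h2 := Submodule.sub_mem _ huF' huK'
            simpa using h2
          have h3 := hzero _ h1 rfl
          exact hu0 (congrArg Prod.snd h3)
        apply conclude (LinearMap.range δ)
        apply aux_isCompl
        · rintro x hx ⟨u, rfl⟩
          have hu : u ∈ F := by simpa [hFdef] using hx
          rw [hFbot] at hu
          have hu0 : u = 0 := by simpa using hu
          rw [hu0]
          simp
        · set W : Submodule R U := C.map ((LinearMap.snd R U U) - (LinearMap.fst R U U))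
            with hWdef
          have hAW : C.map (LinearMap.fst R U U) ⊔ W = ⊤ := by
            rw [eq_top_iff]
            intro u _
            obtain ⟨c, hc, hc2⟩ := hsndfull u
            refine Submodule.mem_sup.mpr ⟨c.1, ⟨c, hc, rfl⟩, c.2 - c.1, ⟨c, hc, rfl⟩, ?_⟩
            rw [hc2]
            abel
          have hW : W = ⊤ := by
            by_contra hWne
            exact hH.2 _ hA W hWne hAW
          intro x
          have hx : x.2 - x.1 ∈ W := by rw [hW]; trivial
          obtain ⟨c, hc, hcv⟩ := hx
          have hcv' : c.2 - c.1 = x.2 - x.1 := hcv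
          refine ⟨c, hc, δ (x.1 - c.1), ⟨x.1 - c.1, rfl⟩, ?_⟩
          rw [hδval]
          refine Prod.ext (by simp) ?_
          show c.2 + (x.1 - c.1) = x.2
          rw [show c.2 + (x.1 - c.1) = (c.2 - c.1) + x.1 by abel, hcv']
          abel

/-- Let `U` be uniform and hollow, `M = U²`, `U₁ = U × 0`, `U₂ = 0 × U`. Suppose that for
any module `X`, any homomorphism `f : X → U₂` and any injective homomorphism `g : X → U₁`,
either (i) there is `h : U₁ → U₂` with `f = h ∘ g`, or (ii) there are a submodule `N` of
`U₁` containing the image of `g` and a surjective homomorphism `h : N → U₂` with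
`f = h ∘ g`. Then `M` is extending. -/
theorem stmt_8 {R : Type*} {U : Type u} [Ring R] [AddCommGroup U] [Module R U]
    (hU : IsUniformModule R U) (hH : IsHollowModule R U)
    (hyp : ∀ (X : Type u) [AddCommGroup X] [Module R X]
      (f : X →ₗ[R] ↥(Submodule.snd R U U)) (g : X →ₗ[R] ↥(Submodule.fst R U U)),
      Function.Injective g →
        (∃ h : ↥(Submodule.fst R U U) →ₗ[R] ↥(Submodule.snd R U U), f = h ∘ₗ g) ∨
        (∃ (N : Submodule R ↥(Submodule.fst R U U)) (hN : ∀ x, g x ∈ N)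
            (h : ↥N →ₗ[R] ↥(Submodule.snd R U U)),
          Function.Surjective h ∧ f = h ∘ₗ LinearMap.codRestrict N g hN)) :
    IsExtendingModule R (U × U) := by
  classical
  intro N
  by_cases hNbot : N = ⊥
  · refine ⟨⊥, ⟨⊤, isCompl_bot_top⟩, by simp [hNbot], ?_⟩
    intro Y hY hYne
    exact absurd (le_bot_iff.mp hY) hYne
  by_cases h2 : N ⊓ Submodule.snd R U U = ⊥
  · exact aux_main hU hH hyp N hNbot h2
  by_cases h1 : N ⊓ Submodule.fst R U U = ⊥
  · -- symmetric case: transport along the swap automorphism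
    have hmem_map : ∀ (p : Submodule R (U × U)) (ee : (U × U) ≃ₗ[R] (U × U)) (x : U × U),
        x ∈ p.map (ee : (U × U) →ₗ[R] (U × U)) ↔ ee.symm x ∈ p := by
      intro p ee x
      constructor
      · rintro ⟨y, hy, rfl⟩
        simpa using hy
      · intro hx
        exact ⟨ee.symm x, hx, by simp⟩
    set e : (U × U) ≃ₗ[R] (U × U) := LinearEquiv.prodComm R U U with hedef
    have heval : ∀ x : U × U, e x = (x.2, x.1) := fun x => rfl
    have hesval : ∀ x : U × U, e.symm x = (x.2, x.1) := fun x => rfl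
    set Ne : Submodule R (U × U) := N.map (e : (U × U) →ₗ[R] (U × U)) with hNedef
    have hmemNe : ∀ x : U × U, x ∈ Ne ↔ e.symm x ∈ N := hmem_map N e
    have hNebot : Ne ≠ ⊥ := by
      obtain ⟨n, hnN, hn0⟩ := (Submodule.ne_bot_iff _).mp hNbot
      rw [Submodule.ne_bot_iff]
      refine ⟨e n, (hmemNe _).mpr (by simpa using hnN), fun h => hn0 ?_⟩
      have := congrArg e.symm h
      simpa using this
    have hNe2 : Ne ⊓ Submodule.snd R U U = ⊥ := by
      rw [eq_bot_iff]
      rintro x ⟨hx1, hx2⟩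
      have hxN : e.symm x ∈ N := (hmemNe x).mp hx1
      have hxf : e.symm x ∈ Submodule.fst R U U := by
        rw [hesval]
        exact aux_mem_fst.mpr (aux_mem_snd.mp hx2)
      have hmem : e.symm x ∈ N ⊓ Submodule.fst R U U := ⟨hxN, hxf⟩
      rw [h1] at hmem
      have h0 : e.symm x = 0 := by simpa using hmem
      have := congrArg e h0
      simpa using this
    obtain ⟨X', ⟨Y', hcompl⟩, hle, hess⟩ := aux_main hU hH hyp Ne hNebot hNe2
    set X : Submodule R (U × U) := X'.map (e.symm : (U × U) →ₗ[R] (U × U)) with hXdef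
    have hmemX : ∀ x : U × U, x ∈ X ↔ e x ∈ X' := by
      intro x
      rw [hXdef, hmem_map X' e.symm x]
      simp
    set Yc : Submodule R (U × U) := Y'.map (e.symm : (U × U) →ₗ[R] (U × U)) with hYcdef
    have hmemYc : ∀ x : U × U, x ∈ Yc ↔ e x ∈ Y' := by
      intro x
      rw [hYcdef, hmem_map Y' e.symm x]
      simp
    refine ⟨X, ⟨Yc, ?_, ?_⟩, ?_, ?_⟩
    · rw [Submodule.disjoint_def]
      intro x hxX hxY
      have hmem : e x ∈ X' ⊓ Y' := ⟨(hmemX x).mp hxX, (hmemYc x).mp hxY⟩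
      rw [hcompl.inf_eq_bot] at hmem
      have h0 : e x = 0 := by simpa using hmem
      have := congrArg e.symm h0
      simpa using this
    · rw [codisjoint_iff, eq_top_iff]
      intro x _
      have hx : e x ∈ X' ⊔ Y' := by
        rw [codisjoint_iff.mp hcompl.codisjoint]
        trivial
      obtain ⟨a, ha, b, hb, hab⟩ := Submodule.mem_sup.mp hx
      refine Submodule.mem_sup.mpr ⟨e.symm a, (hmemX _).mpr (by simpa using ha),
        e.symm b, (hmemYc _).mpr (by simpa using hb), ?_⟩
      have := congrArg e.symm hab
      simpa using this
    · intro n hnN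
      refine (hmemX n).mpr (hle ((hmemNe _).mpr (by simpa using hnN)))
    · intro Y hYX hYbot
      set Ye : Submodule R (U × U) := Y.map (e : (U × U) →ₗ[R] (U × U)) with hYedef
      have hmemYe : ∀ x : U × U, x ∈ Ye ↔ e.symm x ∈ Y := hmem_map Y e
      have hYeX' : Ye ≤ X' := by
        intro z hz
        have hzY : e.symm z ∈ Y := (hmemYe z).mp hz
        have := hYX hzY
        rw [hmemX] at this
        simpa using this
      have hYebot : Ye ≠ ⊥ := by
        obtain ⟨y, hyY, hy0⟩ := (Submodule.ne_bot_iff _).mp hYbot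
        rw [Submodule.ne_bot_iff]
        refine ⟨e y, (hmemYe _).mpr (by simpa using hyY), fun h => hy0 ?_⟩
        have := congrArg e.symm h
        simpa using this
      have hne := hess Ye hYeX' hYebot
      obtain ⟨z, ⟨hz1, hz2⟩, hz0⟩ := (Submodule.ne_bot_iff _).mp hne
      rw [Submodule.ne_bot_iff]
      refine ⟨e.symm z, ⟨(hmemNe z).mp hz1, (hmemYe z).mp hz2⟩, fun h => hz0 ?_⟩
      have := congrArg e h
      simpa using this
  · -- `N` meets both factors nontrivially: `N` is essential in `⊤`
    obtain ⟨n1, hn1m, hn10⟩ := (Submodule.ne_bot_iff _).mp h1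
    obtain ⟨n2, hn2m, hn20⟩ := (Submodule.ne_bot_iff _).mp h2
    obtain ⟨hn1N, hn1f⟩ := hn1m
    obtain ⟨hn2N, hn2s⟩ := hn2m
    have hn12 : n1.2 = 0 := aux_mem_fst.mp hn1f
    have hn21 : n2.1 = 0 := aux_mem_snd.mp hn2s
    have hn11 : n1.1 ≠ 0 := fun h => hn10 (Prod.ext h hn12)
    have hn22 : n2.2 ≠ 0 := fun h => hn20 (Prod.ext hn21 h)
    set K1 : Submodule R U := N.comap (LinearMap.inl R U U) with hK1def
    set K2 : Submodule R U := N.comap (LinearMap.inr R U U) with hK2def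
    have hK1mem : ∀ u : U, u ∈ K1 ↔ ((u, 0) : U × U) ∈ N := fun u => Iff.rfl
    have hK2mem : ∀ u : U, u ∈ K2 ↔ ((0, u) : U × U) ∈ N := fun u => Iff.rfl
    have hK1bot : K1 ≠ ⊥ := by
      rw [Submodule.ne_bot_iff]
      exact ⟨n1.1, (hK1mem _).mpr (by rwa [show ((n1.1, 0) : U × U) = n1 from
        Prod.ext rfl hn12.symm]), hn11⟩
    have hK2bot : K2 ≠ ⊥ := by
      rw [Submodule.ne_bot_iff]
      exact ⟨n2.2, (hK2mem _).mpr (by rwa [show ((0, n2.2) : U × U) = n2 from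
        Prod.ext hn21.symm rfl]), hn22⟩
    refine ⟨⊤, ⟨⊥, isCompl_top_bot⟩, le_top, ?_⟩
    intro Y _ hYbot
    obtain ⟨y, hyY, hy0⟩ := (Submodule.ne_bot_iff _).mp hYbot
    rw [Submodule.ne_bot_iff]
    by_cases hy1 : y.1 = 0
    · have hy2 : y.2 ≠ 0 := fun h => hy0 (Prod.ext hy1 h)
      have hess := hU.2 K2 hK2bot (Submodule.span R {y.2})
        (by rwa [ne_eq, Submodule.span_singleton_eq_bot])
      obtain ⟨u, ⟨huK, huS⟩, hu0⟩ := (Submodule.ne_bot_iff _).mp hess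
      obtain ⟨r, hr⟩ := Submodule.mem_span_singleton.mp huS
      refine ⟨r • y, ⟨?_, Y.smul_mem r hyY⟩, fun h => hu0 ?_⟩
      · have : r • y = ((0 : U), u) := Prod.ext (by simp [hy1]) (by rw [← hr]; rfl)
        rw [this]
        exact (hK2mem _).mp huK
      · rw [← hr]
        have := congrArg Prod.snd h
        simpa using this
    · have hess := hU.2 K1 hK1bot (Submodule.span R {y.1})
        (by rwa [ne_eq, Submodule.span_singleton_eq_bot])
      obtain ⟨u, ⟨huK, huS⟩, hu0⟩ := (Submodule.ne_bot_iff _).mp hess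
      obtain ⟨r, hr⟩ := Submodule.mem_span_singleton.mp huS
      have hry1 : (r • y).1 = u := by rw [← hr]; rfl
      by_cases hry2 : (r • y).2 = 0
      · refine ⟨r • y, ⟨?_, Y.smul_mem r hyY⟩, fun h => hu0 ?_⟩
        · rw [show r • y = ((u : U), (0 : U)) from Prod.ext hry1 hry2]
          exact (hK1mem _).mp huK
        · rw [← hry1, h]
          rfl
      · have hess2 := hU.2 K2 hK2bot (Submodule.span R {(r • y).2})
          (by rwa [ne_eq, Submodule.span_singleton_eq_bot])
        obtain ⟨v, ⟨hvK, hvS⟩, hv0⟩ := (Submodule.ne_bot_iff _).mp hess2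
        obtain ⟨s, hs⟩ := Submodule.mem_span_singleton.mp hvS
        refine ⟨s • (r • y), ⟨?_, Y.smul_mem s (Y.smul_mem r hyY)⟩, fun h => hv0 ?_⟩
        · have hval : s • (r • y) = ((s • u : U), v) :=
            Prod.ext (by rw [← hry1]; rfl) (by rw [← hs]; rfl)
          rw [hval]
          have hm1 : ((s • u, 0) : U × U) ∈ N := (hK1mem _).mp (K1.smul_mem s huK)
          have hm2 : ((0, v) : U × U) ∈ N := (hK2mem _).mp hvK
          have := N.add_mem hm1 hm2
          simpa using this
        · rw [← hs]
          have := congrArg Prod.snd h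
          simpa using this
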